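/- Let N ≥ 2 and consider the GARK formulation of the Trapezoidal Splitting method: two stages per partition with blocks A^{(q,m)} = [[1/2,0],[1/2,0]] for m < q, A^{(q,m)} = [[0,0],[1/2,1/2]] for m ≥ q, and weights b^{(q)} = (1/2,1/2)ᵀ. Then the GARK order conditions through order two hold: b^{(σ)ᵀ}𝟙 = 1 and b^{(σ)ᵀ}c^{(σ,ν)} = 1/2 for all σ,ν, where c^{(σ,ν)} = A^{(σ,ν)}𝟙; moreover the method is not internally consistent, i.e. there exist q and m, m' with c^{(q,m)} ≠ c^{(q,m')}. -/

import Mathlib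

open Matrix

/-- The GARK formulation of the Trapezoidal Splitting method satisfies the GARK order
conditions through order two, but is not internally consistent. -/
theorem trapezoidal_splitting_order_two (N : ℕ) (hN : 2 ≤ N) :
    let A : Fin N → Fin N → Matrix (Fin 2) (Fin 2) ℝ :=
      fun q m => if (m : ℕ) < (q : ℕ) then !![1/2, 0; 1/2, 0] else !![0, 0; 1/2, 1/2]
    let b : Fin 2 → ℝ := ![1/2, 1/2]
    (∀ σ : Fin N, b ⬝ᵥ (1 : Fin 2 → ℝ) = 1) ∧
    (∀ σ ν : Fin N, b ⬝ᵥ (A σ ν).mulVec (1 : Fin 2 → ℝ) = 1/2) ∧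
    (∃ q m m' : Fin N,
      (A q m).mulVec (1 : Fin 2 → ℝ) ≠ (A q m').mulVec (1 : Fin 2 → ℝ)) := by
  intro A b
  refine ⟨fun σ => ?_, fun σ ν => ?_, ?_⟩
  · simp [b, dotProduct, Fin.sum_univ_two]
    norm_num
  · simp only [A, b]
    by_cases h : (ν : ℕ) < (σ : ℕ) <;>
      simp [h, dotProduct, mulVec, Fin.sum_univ_two] <;> norm_num
  · refine ⟨⟨1, by omega⟩, ⟨0, by omega⟩, ⟨1, by omega⟩, ?_⟩
    simp only [A]
    norm_num
    intro h
    have := h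
    simp [mulVec, dotProduct, Fin.sum_univ_two, vecHead, vecTail] at this
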